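/- (Level sets of the partial trace estimator.) Let p₁, p₂ be positive integers, let Σ₁ be a p₁ × p₁ real positive definite matrix, Σ₂ a p₂ × p₂ real positive definite matrix, and let S be a p₁p₂ × p₁p₂ real positive definite matrix. Then P(S) = Σ₁ ⊗ Σ₂ if and only if tr₁(S) = tr(Σ₂)·Σ₁ and tr₂(S) = tr(Σ₁)·Σ₂. -/

import Mathlib

open Matrix Kronecker BigOperators

/-- First partial trace: `[tr₁ S] i i' = ∑ j, S (i,j) (i',j)`. -/
def ptr1 {p₁ p₂ : ℕ} (S : Matrix (Fin p₁ × Fin p₂) (Fin p₁ × Fin p₂) ℝ) :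
    Matrix (Fin p₁) (Fin p₁) ℝ :=
  Matrix.of fun i i' => ∑ j : Fin p₂, S (i, j) (i', j)

/-- Second partial trace: `[tr₂ S] j j' = ∑ i, S (i,j) (i,j')`. -/
def ptr2 {p₁ p₂ : ℕ} (S : Matrix (Fin p₁ × Fin p₂) (Fin p₁ × Fin p₂) ℝ) :
    Matrix (Fin p₂) (Fin p₂) ℝ :=
  Matrix.of fun j j' => ∑ i : Fin p₁, S (i, j) (i, j')

/-- The partial trace estimator `P(S) = tr(S)⁻¹ • (tr₁(S) ⊗ tr₂(S))`. -/
noncomputable def ptEst {p₁ p₂ : ℕ} (S : Matrix (Fin p₁ × Fin p₂) (Fin p₁ × Fin p₂) ℝ) :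
    Matrix (Fin p₁ × Fin p₂) (Fin p₁ × Fin p₂) ℝ :=
  (S.trace)⁻¹ • (ptr1 S ⊗ₖ ptr2 S)

lemma posdef_trace_pos {n : Type*} [Fintype n] [DecidableEq n] [Nonempty n]
    {M : Matrix n n ℝ} (hM : M.PosDef) : 0 < M.trace := by
  have hdiag : ∀ i, 0 < M i i := by
    intro i
    have := hM.dotProduct_mulVec_pos (x := Pi.single i 1) (by simp [Pi.single_eq_same, Function.ne_iff])
    simpa [Matrix.mulVec_single, single_dotProduct] using this
  exact Finset.sum_pos (fun i _ => hdiag i) Finset.univ_nonempty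

lemma ptr1_trace {p₁ p₂ : ℕ} (S : Matrix (Fin p₁ × Fin p₂) (Fin p₁ × Fin p₂) ℝ) :
    (ptr1 S).trace = S.trace := by
  simp [Matrix.trace, ptr1, Matrix.diag, ← Finset.sum_product', Finset.univ_product_univ]

lemma ptr2_trace {p₁ p₂ : ℕ} (S : Matrix (Fin p₁ × Fin p₂) (Fin p₁ × Fin p₂) ℝ) :
    (ptr2 S).trace = S.trace := by
  rw [Matrix.trace]
  simp only [Matrix.trace, ptr2, Matrix.diag, Matrix.of_apply]
  rw [Finset.sum_comm]
  simp [← Finset.sum_product', Finset.univ_product_univ]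

lemma ptr1_kron {p₁ p₂ : ℕ} (A : Matrix (Fin p₁) (Fin p₁) ℝ) (B : Matrix (Fin p₂) (Fin p₂) ℝ) :
    ptr1 (A ⊗ₖ B) = B.trace • A := by
  ext i i'
  simp [ptr1, Matrix.kroneckerMap_apply, Matrix.trace, Matrix.diag, Finset.mul_sum, mul_comm]

lemma ptr2_kron {p₁ p₂ : ℕ} (A : Matrix (Fin p₁) (Fin p₁) ℝ) (B : Matrix (Fin p₂) (Fin p₂) ℝ) :
    ptr2 (A ⊗ₖ B) = A.trace • B := by
  ext j j'
  simp [ptr2, Matrix.kroneckerMap_apply, Matrix.trace, Matrix.diag, Finset.sum_mul]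

lemma ptr1_smul {p₁ p₂ : ℕ} (c : ℝ) (S : Matrix (Fin p₁ × Fin p₂) (Fin p₁ × Fin p₂) ℝ) :
    ptr1 (c • S) = c • ptr1 S := by
  ext i i'; simp [ptr1, Finset.mul_sum]

lemma ptr2_smul {p₁ p₂ : ℕ} (c : ℝ) (S : Matrix (Fin p₁ × Fin p₂) (Fin p₁ × Fin p₂) ℝ) :
    ptr2 (c • S) = c • ptr2 S := by
  ext j j'; simp [ptr2, Finset.mul_sum]

/-- Level sets of the partial trace estimator: `P(S) = Σ₁ ⊗ Σ₂` iff `S` has the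
same partial traces as `Σ₁ ⊗ Σ₂`. Here `Sigma1, Sigma2` play the role of `Σ₁, Σ₂`. -/
theorem stmt6 (p₁ p₂ : ℕ) (hp₁ : 0 < p₁) (hp₂ : 0 < p₂)
    (Sigma1 : Matrix (Fin p₁) (Fin p₁) ℝ) (hS1 : Sigma1.PosDef)
    (Sigma2 : Matrix (Fin p₂) (Fin p₂) ℝ) (hS2 : Sigma2.PosDef)
    (S : Matrix (Fin p₁ × Fin p₂) (Fin p₁ × Fin p₂) ℝ) (hS : S.PosDef) :
    ptEst S = Sigma1 ⊗ₖ Sigma2 ↔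
      ptr1 S = Sigma2.trace • Sigma1 ∧ ptr2 S = Sigma1.trace • Sigma2 := by
  haveI : Nonempty (Fin p₁) := ⟨⟨0, hp₁⟩⟩
  haveI : Nonempty (Fin p₂) := ⟨⟨0, hp₂⟩⟩
  have ht : 0 < S.trace := posdef_trace_pos hS
  have ht' : S.trace ≠ 0 := ne_of_gt ht
  constructor
  · intro h
    constructor
    · have h1 := congrArg ptr1 h
      rw [ptEst, ptr1_smul, ptr1_kron, ptr1_kron, ptr2_trace, smul_smul,
        inv_mul_cancel₀ ht', one_smul] at h1
      exact h1
    · have h2 := congrArg ptr2 h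
      rw [ptEst, ptr2_smul, ptr2_kron, ptr2_kron, ptr1_trace, smul_smul,
        inv_mul_cancel₀ ht', one_smul] at h2
      exact h2
  · rintro ⟨h1, h2⟩
    have htS : S.trace = Sigma2.trace * Sigma1.trace := by
      rw [← ptr1_trace S, h1, Matrix.trace_smul, smul_eq_mul]
    have hone : S.trace⁻¹ * Sigma2.trace * Sigma1.trace = 1 := by
      rw [mul_assoc, ← htS, inv_mul_cancel₀ ht']
    rw [ptEst, h1, h2, Matrix.smul_kronecker, Matrix.kronecker_smul, smul_smul, smul_smul,
      hone, one_smul]
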